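/- arXiv:1411.6259 — 3 statements merged into one kernel-verified Lean document; each statement's English description precedes it below -/
import Mathlib

section
/- Let r, s, m, n be integers such that m divides 2·r·s, gcd(gcd(r, s), m) = 1, and r and s are not both odd. Then gcd(n·r·s + r − s, m) = 1, and consequently gcd(n·(n·r·s + r − s), m) = gcd(n, m). -/
lemma aux_key (r s m n : ℤ) (hdvd : m ∣ 2 * (r * s))
    (hgcd : Int.gcd (Int.gcd r s : ℤ) m = 1) (hpar : ¬ (Odd r ∧ Odd s)) :
    Int.gcd (n * r * s + r - s) m = 1 := by
  by_contra h
  obtain ⟨p, hp, hpd⟩ := Nat.exists_prime_and_dvd h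
  have hpm : (p : ℤ) ∣ m :=
    Int.dvd_natAbs.mp (Int.natCast_dvd_natCast.mpr (hpd.trans (Nat.gcd_dvd_right _ _)))
  have hpk : (p : ℤ) ∣ n * r * s + r - s :=
    Int.dvd_natAbs.mp (Int.natCast_dvd_natCast.mpr (hpd.trans (Nat.gcd_dvd_left _ _)))
  have hpI : Prime (p : ℤ) := Nat.prime_iff_prime_int.mp hp
  have hp2rs : (p : ℤ) ∣ 2 * (r * s) := hpm.trans hdvd
  have hrs : (p : ℤ) ∣ r ∨ (p : ℤ) ∣ s := by
    rcases hpI.dvd_mul.mp hp2rs with h2 | hrs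
    · have hp2 : p = 2 := by
        have h1 : (p : ℤ) ≤ 2 := Int.le_of_dvd (by norm_num) h2
        have h2' := hp.two_le
        omega
      subst hp2
      rcases Decidable.not_and_iff_or_not.mp hpar with hr | hs
      · exact Or.inl (by exact_mod_cast (Int.not_odd_iff_even.mp hr).two_dvd)
      · exact Or.inr (by exact_mod_cast (Int.not_odd_iff_even.mp hs).two_dvd)
    · exact hpI.dvd_mul.mp hrs
  have hboth : (p : ℤ) ∣ r ∧ (p : ℤ) ∣ s := by
    rcases hrs with hr | hs
    · refine ⟨hr, ?_⟩
      have h2 : (p : ℤ) ∣ (n * r * s + r) - (n * r * s + r - s) :=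
        dvd_sub (dvd_add ((hr.mul_left n).mul_right s) hr) hpk
      simpa using h2
    · refine ⟨?_, hs⟩
      have h2 : (p : ℤ) ∣ (n * r * s + r - s) - (n * r * s - s) :=
        dvd_sub hpk (dvd_sub ((hs.mul_left (n * r))) hs)
      simpa using h2
  have hone : (p : ℤ) ∣ (1 : ℤ) := by
    have := Int.dvd_coe_gcd (Int.dvd_coe_gcd hboth.1 hboth.2) hpm
    rwa [hgcd] at this
  exact hp.one_lt.ne' (by exact_mod_cast Int.eq_one_of_dvd_one (by positivity) hone)

/-- If m ∣ 2rs, gcd(gcd(r,s), m) = 1 and r, s are not both odd, then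
gcd(nrs + r − s, m) = 1 and gcd(n·(nrs + r − s), m) = gcd(n, m). -/
theorem stmt_2 (r s m n : ℤ) (hdvd : m ∣ 2 * (r * s))
    (hgcd : Int.gcd (Int.gcd r s : ℤ) m = 1) (hpar : ¬ (Odd r ∧ Odd s)) :
    Int.gcd (n * r * s + r - s) m = 1 ∧
      Int.gcd (n * (n * r * s + r - s)) m = Int.gcd n m := by
  have h1 := aux_key r s m n hdvd hgcd hpar
  refine ⟨h1, ?_⟩
  have hc : Nat.Coprime (Int.natAbs (n * r * s + r - s)) (Int.natAbs m) := h1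
  calc Int.gcd (n * (n * r * s + r - s)) m
      = Nat.gcd ((Int.natAbs n) * Int.natAbs (n * r * s + r - s)) (Int.natAbs m) := by
        rw [Int.gcd, Int.natAbs_mul]
    _ = Nat.gcd (Int.natAbs n) (Int.natAbs m) := Nat.Coprime.gcd_mul_right_cancel _ hc
    _ = Int.gcd n m := rfl
end

section
/- For all integers x and y, 8·x² + 30·x·y + 10·y² ≠ −2. -/
/-- Pell-type descent: `29a² - 5b² = 1` has no integer solutions. -/
lemma no_pell : ∀ a b : ℤ, 29 * a ^ 2 - 5 * b ^ 2 ≠ 1 := by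
  suffices H : ∀ n : ℕ, ∀ a b : ℤ, a.natAbs = n → 29 * a ^ 2 - 5 * b ^ 2 ≠ 1 by
    intro a b
    exact H a.natAbs a b rfl
  intro n
  induction n using Nat.strong_induction_on with
  | _ n ih =>
    intro a b hn h
    -- WLOG a ≥ 0, b ≥ 0
    wlog ha : 0 ≤ a generalizing a
    · exact this (-a) (by simpa using hn) (by ring_nf; ring_nf at h; linarith) (by omega)
    wlog hb : 0 ≤ b generalizing b
    · exact this (-b) (by ring_nf; ring_nf at h; linarith) (by omega)
    -- a ≥ 1
    have ha1 : 1 ≤ a := by nlinarith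
    by_cases ha3 : a ≤ 2
    · have hb5 : b ≤ 5 := by nlinarith
      interval_cases a <;> interval_cases b <;> norm_num at h
    · push_neg at ha3
      -- descent step
      set a' : ℤ := 289 * a - 120 * b with ha'
      set b' : ℤ := 289 * b - 696 * a with hb'
      have h' : 29 * a' ^ 2 - 5 * b' ^ 2 = 1 := by
        rw [ha', hb']; nlinarith [h]
      have hb2 : 5 * b ^ 2 = 29 * a ^ 2 - 1 := by linarith
      -- 0 < a'
      have hpos : 0 < a' := by nlinarith
      -- a' < a
      have hlt : a' < a := by nlinarith
      exact ih a'.natAbs (by omega) a' b' rfl h'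

/-- `29x² - 5z² = 4` has no integer solutions. -/
lemma no_four : ∀ x z : ℤ, 29 * x ^ 2 - 5 * z ^ 2 ≠ 4 := by
  intro x z h
  rcases Int.even_or_odd x with ⟨a, rfl⟩ | ⟨a, rfl⟩ <;>
    rcases Int.even_or_odd z with ⟨b, rfl⟩ | ⟨b, rfl⟩
  · -- both even: reduce to no_pell
    exact no_pell a b (by nlinarith)
  · have hA : (a + a) ^ 2 = 4 * a ^ 2 := by ring
    have h' : 116 * a ^ 2 - 20 * b ^ 2 - 20 * b = 9 := by nlinarith
    omega
  · have h' : 116 * a ^ 2 + 116 * a - 20 * b ^ 2 = -25 := by nlinarith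
    omega
  · have h' : 116 * a ^ 2 + 116 * a - 20 * b ^ 2 - 20 * b = -20 := by nlinarith
    have hea : ∃ k : ℤ, a ^ 2 + a = 2 * k := by
      rcases Int.even_or_odd a with ⟨c, rfl⟩ | ⟨c, rfl⟩
      · exact ⟨2 * c ^ 2 + c, by ring⟩
      · exact ⟨2 * c ^ 2 + 3 * c + 1, by ring⟩
    have heb : ∃ k : ℤ, b ^ 2 + b = 2 * k := by
      rcases Int.even_or_odd b with ⟨c, rfl⟩ | ⟨c, rfl⟩
      · exact ⟨2 * c ^ 2 + c, by ring⟩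
      · exact ⟨2 * c ^ 2 + 3 * c + 1, by ring⟩
    obtain ⟨k, hk⟩ := hea
    obtain ⟨m, hm⟩ := heb
    omega

/-- The quadratic form 8x² + 30xy + 10y² does not represent −2 over ℤ. -/
theorem stmt_7 : ∀ x y : ℤ, 8 * x ^ 2 + 30 * x * y + 10 * y ^ 2 ≠ -2 := by
  intro x y h
  exact no_four x (3 * x + 2 * y) (by nlinarith)
end

section
/- Let A be the 2×2 integer matrix [[2, 13], [13, 12]] and B the 2×2 integer matrix [[8, 15], [15, 10]]. Then det A = det B = −145, but there is no 2×2 integer matrix P with det P = ±1 (i.e., P invertible over ℤ) such that Pᵀ·A·P = B. In other words, the two even rank-two lattices with these Gram matrices have equal discriminant but are not isomorphic over ℤ. -/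
/-- Descent lemma: no solution of `u² - 145 y² = -16` with `u ≥ 0`, `y > 0`
satisfies `u ≡ 7y` or `u ≡ y (mod 8)`. -/
lemma pell_aux : ∀ n : ℕ, ∀ u y : ℤ, 0 ≤ u → 0 < y → y.toNat = n →
    u ^ 2 - 145 * y ^ 2 = -16 →
    (u % 8 = (7 * y) % 8 ∨ u % 8 = y % 8) → False := by
  intro n
  induction n using Nat.strong_induction_on with
  | _ n ih =>
    intro u y hu hy hyn heq hmod
    by_cases hsmall : y ≤ 4
    · -- base case: y ∈ {1,2,3,4}, bounded u
      have hub : u ≤ 48 := by nlinarith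
      interval_cases y <;> interval_cases u <;> omega
    · push_neg at hsmall
      -- y ≥ 5, descent step
      have h12 : 12 * y < u := by nlinarith
      set u' : ℤ := 289 * u - 3480 * y with hu'
      set y' : ℤ := 289 * y - 24 * u with hy'
      have heq' : u' ^ 2 - 145 * y' ^ 2 = -16 := by linear_combination heq
      have hy'pos : 0 < y' := by nlinarith
      have hy'lt : y' < y := by nlinarith
      have hlt : y'.toNat < n := by omega
      rcases le_or_gt 0 u' with h0 | h0
      · exact ih y'.toNat hlt u' y' h0 hy'pos rfl heq' (by omega)
      · exact ih y'.toNat hlt (-u') y' (by omega) hy'pos rfl (by linear_combination heq) (by omega)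

lemma form_ne : ∀ x y : ℤ, 4 * x ^ 2 + 15 * x * y + 5 * y ^ 2 ≠ -1 := by
  intro x y h
  rcases lt_trichotomy y 0 with hy | hy | hy
  · -- replace (x,y) by (-x,-y)
    have h' : 4 * (-x) ^ 2 + 15 * (-x) * (-y) + 5 * (-y) ^ 2 = -1 := by ring_nf; linarith [h]
    set u : ℤ := 8 * (-x) + 15 * (-y) with hu
    have heq : u ^ 2 - 145 * (-y) ^ 2 = -16 := by linear_combination 16 * h'
    rcases le_or_gt 0 u with h0 | h0
    · exact pell_aux (-y).toNat u (-y) h0 (by omega) rfl heq (by omega)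
    · exact pell_aux (-y).toNat (-u) (-y) (by omega) (by omega) rfl (by linear_combination 16 * h') (by omega)
  · subst hy; nlinarith
  · set u : ℤ := 8 * x + 15 * y with hu
    have heq : u ^ 2 - 145 * y ^ 2 = -16 := by linear_combination 16 * h
    rcases le_or_gt 0 u with h0 | h0
    · exact pell_aux y.toNat u y h0 hy rfl heq (by omega)
    · exact pell_aux y.toNat (-u) y (by omega) hy rfl (by linear_combination 16 * h) (by omega)


/-- The Gram matrices A = [[2,13],[13,12]] and B = [[8,15],[15,10]] both have
determinant −145, but are not congruent by any matrix P ∈ GL₂(ℤ):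
the corresponding even rank-two lattices have equal discriminant but are not
isomorphic over ℤ. -/
theorem stmt_8 :
    (!![2, 13; 13, 12] : Matrix (Fin 2) (Fin 2) ℤ).det = -145 ∧
    (!![8, 15; 15, 10] : Matrix (Fin 2) (Fin 2) ℤ).det = -145 ∧
    ¬ ∃ P : Matrix (Fin 2) (Fin 2) ℤ, (P.det = 1 ∨ P.det = -1) ∧
      P.transpose * !![2, 13; 13, 12] * P = !![8, 15; 15, 10] := by
  refine ⟨by simp [Matrix.det_fin_two_of], by simp [Matrix.det_fin_two_of], ?_⟩
  rintro ⟨P, hdet, hP⟩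
  set a := P 0 0 with ha
  set b := P 0 1 with hb
  set c := P 1 0 with hc
  set d := P 1 1 with hd
  rw [Matrix.det_fin_two] at hdet
  have h00 := congrFun (congrFun hP 0) 0
  have h01 := congrFun (congrFun hP 0) 1
  have h11 := congrFun (congrFun hP 1) 1
  simp [Matrix.mul_apply, Fin.sum_univ_two, Matrix.transpose_apply] at h00 h01 h11
  -- w = adjugate P * (-1, 2)
  set w0 : ℤ := -d - 2 * b with hw0
  set w1 : ℤ := c + 2 * a with hw1
  have key : 2 * (4 * w0 ^ 2 + 15 * w0 * w1 + 5 * w1 ^ 2) = -2 * (a * d - b * c) ^ 2 := by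
    linear_combination -(w0 ^ 2 * h00) - (2 * w0 * w1) * h01 - w1 ^ 2 * h11
  have : 4 * w0 ^ 2 + 15 * w0 * w1 + 5 * w1 ^ 2 = -1 := by
    rcases hdet with h | h <;> rw [h] at key <;> linarith
  exact form_ne w0 w1 this
end
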